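/- For all a, b > 0 with a ≠ b, one has T(a,b) < (2/π)·D(a,b) + (1 − 2/π)·H(a,b). -/

import Mathlib

open Real

lemma my_arctan_le_self {x : ℝ} (hx : 0 ≤ x) : Real.arctan x ≤ x := by
  have mono : MonotoneOn (fun x : ℝ => x - Real.arctan x) (Set.Ici 0) := by
    apply monotoneOn_of_deriv_nonneg (convex_Ici 0)
    · exact (continuous_id.sub Real.continuous_arctan).continuousOn
    · intro x hx
      exact (differentiable_id.sub Real.differentiable_arctan).differentiableAt.differentiableWithinAt
    · intro x hx
      have hd : HasDerivAt (fun x : ℝ => x - Real.arctan x) (1 - 1/(1+x^2)) x :=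
        (hasDerivAt_id x).sub (Real.hasDerivAt_arctan x)
      rw [hd.deriv]
      have h1 : (0:ℝ) < 1 + x^2 := by positivity
      rw [sub_nonneg, div_le_one h1]
      nlinarith [sq_nonneg x]
  have := mono (Set.self_mem_Ici) (Set.mem_Ici.mpr hx) hx
  simp [Real.arctan_zero] at this
  linarith

lemma my_poly_le_arctan {x : ℝ} (hx : 0 ≤ x) :
    x - x^3/3 + x^5/5 - x^7/7 ≤ Real.arctan x := by
  have mono : MonotoneOn (fun x : ℝ => Real.arctan x - (x - x^3/3 + x^5/5 - x^7/7)) (Set.Ici 0) := by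
    apply monotoneOn_of_deriv_nonneg (convex_Ici 0)
    · exact (Real.continuous_arctan.sub (by continuity)).continuousOn
    · intro x hx
      apply DifferentiableAt.differentiableWithinAt
      apply Real.differentiable_arctan.differentiableAt.sub
      fun_prop
    · intro x hx
      have hp : HasDerivAt (fun x : ℝ => x - x^3/3 + x^5/5 - x^7/7)
          (1 - 3*x^2/3 + 5*x^4/5 - 7*x^6/7) x := by
        have h1 := hasDerivAt_id x
        have h3 := (hasDerivAt_pow 3 x).div_const 3
        have h5 := (hasDerivAt_pow 5 x).div_const 5
        have h7 := (hasDerivAt_pow 7 x).div_const 7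
        have := ((h1.sub h3).add h5).sub h7
        exact this.congr_deriv (by push_cast; ring)
      have hd : HasDerivAt (fun x : ℝ => Real.arctan x - (x - x^3/3 + x^5/5 - x^7/7))
          (1/(1+x^2) - (1 - 3*x^2/3 + 5*x^4/5 - 7*x^6/7)) x :=
        (Real.hasDerivAt_arctan x).sub hp
      rw [hd.deriv]
      have h1 : (0:ℝ) < 1 + x^2 := by positivity
      have key : 1/(1+x^2) - (1 - 3*x^2/3 + 5*x^4/5 - 7*x^6/7) = x^8/(1+x^2) := by
        field_simp; ring
      rw [key]
      positivity
  have := mono (Set.self_mem_Ici) (Set.mem_Ici.mpr hx) hx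
  simp [Real.arctan_zero] at this
  linarith

set_option maxHeartbeats 1000000 in
lemma key_ineq {t : ℝ} (h0 : 0 < t) (h1 : t < 1) :
    π * (t * (1 + t^2)) < Real.arctan t * (π + 6*t^2 - (π-2)*t^4) := by
  have hπu : π < 3.141593 := by
    have := Real.pi_lt_d2
    nlinarith [Real.pi_lt_d6]
  have hπl : 3.141592 < π := by nlinarith [Real.pi_gt_d6]
  have ht1 : t ≤ 1 := h1.le
  have ht4 : t^4 ≤ 1 := pow_le_one₀ h0.le ht1
  have hNpos : 0 < π + 6*t^2 - (π-2)*t^4 := by nlinarith [sq_nonneg t]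
  rcases le_or_gt t (7/10) with h7 | h7
  · -- small t: use Taylor lower bound
    have hP : t - t^3/3 + t^5/5 - t^7/7 ≤ Real.arctan t := my_poly_le_arctan h0.le
    have hPle : t - t^3/3 + t^5/5 - t^7/7 ≤ t := by
      nlinarith [pow_pos h0 3, pow_pos h0 5, pow_pos h0 7]
    have step : π * (t * (1 + t^2)) < (t - t^3/3 + t^5/5 - t^7/7) * (π + 6*t^2 - (π-2)*t^4) := by
      have hC : 0 ≤ t * (1 + t^2) - (t - t^3/3 + t^5/5 - t^7/7) * (1 - t^4) := by
        nlinarith [mul_le_mul_of_nonneg_right hPle (by nlinarith : (0:ℝ) ≤ 1 - t^4), pow_pos h0 3]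
      nlinarith [mul_le_mul_of_nonneg_left hπu.le hC, sq_nonneg t, sq_nonneg (t^2 - 49/100),
        mul_pos h0 h0, pow_pos h0 3, pow_pos h0 5,
        mul_nonneg (mul_nonneg h0.le h0.le) (sub_nonneg.mpr h7), sq_nonneg (t - 7/10)]
    calc π * (t * (1 + t^2)) < (t - t^3/3 + t^5/5 - t^7/7) * (π + 6*t^2 - (π-2)*t^4) := step
      _ ≤ Real.arctan t * (π + 6*t^2 - (π-2)*t^4) := mul_le_mul_of_nonneg_right hP hNpos.le
  · -- large t: use arctan t ≥ π/4 - (1-t)/(1+t)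
    have h1t : (0:ℝ) < 1 + t := by linarith
    have hmul : t * ((1 - t) / (1 + t)) < 1 := by
      have e : t * ((1 - t) / (1 + t)) = (t * (1 - t)) / (1 + t) := by ring
      rw [e, div_lt_one h1t]; nlinarith
    have hid : Real.arctan t + Real.arctan ((1 - t) / (1 + t)) = π / 4 := by
      rw [Real.arctan_add hmul]
      have hnum : (t + (1 - t) / (1 + t)) / (1 - t * ((1 - t) / (1 + t))) = 1 := by
        rw [div_eq_one_iff_eq]
        · field_simp; ring
        · have e : 1 - t * ((1 - t) / (1 + t)) = (1 + t^2) / (1 + t) := by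
            field_simp; ring
          rw [e]; positivity
      rw [hnum, Real.arctan_one]
    have hats : Real.arctan ((1 - t) / (1 + t)) ≤ (1 - t) / (1 + t) :=
      my_arctan_le_self (div_nonneg (by linarith) (by linarith))
    have hlb : π/4 - (1-t)/(1+t) ≤ Real.arctan t := by linarith
    have step : π * (t * (1 + t^2)) < (π/4 - (1-t)/(1+t)) * (π + 6*t^2 - (π-2)*t^4) := by
      rw [show π/4 - (1-t)/(1+t) = (π*(1+t)/4 - (1-t))/(1+t) by field_simp]
      rw [div_mul_eq_mul_div, lt_div_iff₀ h1t]
      have ha : 0 ≤ (1+t)*(1-t^4)/4 := by nlinarith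
      have hd : 0 ≤ 2*(3.141592)*((1+t)*(1-t^4)/4) +
          ((1+t)*(6*t^2+2*t^4)/4 - (1-t)*(1-t^4) - t*(1+t^2)*(1+t)) := by
        nlinarith [sq_nonneg (1-t), mul_nonneg (sub_nonneg.mpr h1.le) (sub_nonneg.mpr h7.le),
          mul_nonneg (mul_nonneg (sub_nonneg.mpr h1.le) (sub_nonneg.mpr h7.le)) h0.le,
          mul_nonneg (mul_nonneg (sub_nonneg.mpr h1.le) (sub_nonneg.mpr h7.le)) (sq_nonneg t),
          mul_nonneg (mul_nonneg (sub_nonneg.mpr h1.le) (sub_nonneg.mpr h7.le)) (mul_nonneg h0.le (sq_nonneg t))]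
      have hEL : 0 < ((1+t)*(1-t^4)/4)*3.141592^2 +
          ((1+t)*(6*t^2+2*t^4)/4 - (1-t)*(1-t^4) - t*(1+t^2)*(1+t))*3.141592 +
          (-(1-t)*(6*t^2+2*t^4)) := by
        nlinarith [sq_nonneg (1-t), mul_pos (sub_pos.mpr h1) h0,
          mul_nonneg (sub_nonneg.mpr h1.le) (sub_nonneg.mpr h7.le),
          mul_nonneg (mul_nonneg (sub_nonneg.mpr h1.le) (sub_nonneg.mpr h7.le)) h0.le,
          mul_nonneg (mul_nonneg (sub_nonneg.mpr h1.le) (sub_nonneg.mpr h7.le)) (sq_nonneg t),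
          mul_nonneg (mul_nonneg (sub_nonneg.mpr h1.le) (sub_nonneg.mpr h7.le)) (mul_nonneg h0.le (sq_nonneg t)),
          mul_pos (mul_pos (sub_pos.mpr h1) h0) h0]
      nlinarith [mul_nonneg ha (sq_nonneg (π - 3.141592)),
        mul_nonneg hd (sub_nonneg.mpr hπl.le), hEL]
    calc π * (t * (1 + t^2)) < (π/4 - (1-t)/(1+t)) * (π + 6*t^2 - (π-2)*t^4) := step
      _ ≤ Real.arctan t * (π + 6*t^2 - (π-2)*t^4) := mul_le_mul_of_nonneg_right hlb hNpos.le

noncomputable def harmonicMean (a b : ℝ) : ℝ := 2 * a * b / (a + b)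

noncomputable def seiffertT (a b : ℝ) : ℝ := (a - b) / (2 * Real.arctan ((a - b) / (a + b)))

noncomputable def contraD (a b : ℝ) : ℝ := (a ^ 3 + b ^ 3) / (a ^ 2 + b ^ 2)

lemma stmt_2_aux (a b : ℝ) (hb : 0 < b) (hba : b < a) :
    seiffertT a b < (2 / Real.pi) * contraD a b + (1 - 2 / Real.pi) * harmonicMean a b := by
  have ha : 0 < a := lt_trans hb hba
  have hs : 0 < a + b := by linarith
  set t := (a - b) / (a + b) with ht
  have ht0 : 0 < t := div_pos (by linarith) hs
  have ht1 : t < 1 := by rw [ht, div_lt_one hs]; linarith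
  have harct : 0 < Real.arctan t := by simpa using Real.arctan_strictMono ht0
  have hπ : 0 < π := Real.pi_pos
  have key := key_ineq ht0 ht1
  have e1 : seiffertT a b = (a + b) * t / (2 * Real.arctan t) := by
    unfold seiffertT
    rw [← ht]
    congr 1
    rw [ht]
    field_simp
  have e2 : (2 / Real.pi) * contraD a b + (1 - 2 / Real.pi) * harmonicMean a b
      = (a + b) * (π + 6*t^2 - (π-2)*t^4) / (2*π*(1+t^2)) := by
    unfold contraD harmonicMean
    rw [ht]
    have h2 : a^2 + b^2 ≠ 0 := by positivity
    field_simp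
    ring
  rw [e1, e2, div_lt_div_iff₀ (by positivity) (by positivity)]
  nlinarith [mul_lt_mul_of_pos_left key (by positivity : (0:ℝ) < 2*(a+b))]

theorem stmt_2 (a b : ℝ) (ha : 0 < a) (hb : 0 < b) (hab : a ≠ b) :
    seiffertT a b < (2 / Real.pi) * contraD a b + (1 - 2 / Real.pi) * harmonicMean a b := by
  rcases hab.lt_or_gt with h | h
  · have hsymm1 : seiffertT a b = seiffertT b a := by
      unfold seiffertT
      rw [show (a - b) / (a + b) = -((b - a) / (b + a)) by ring, Real.arctan_neg,
        show a - b = -(b - a) by ring, mul_neg, neg_div_neg_eq]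
    have hsymm2 : contraD a b = contraD b a := by unfold contraD; rw [add_comm (a^3), add_comm (a^2)]
    have hsymm3 : harmonicMean a b = harmonicMean b a := by
      unfold harmonicMean; rw [add_comm a b]; ring_nf
    rw [hsymm1, hsymm2, hsymm3]
    exact stmt_2_aux b a ha h
  · exact stmt_2_aux a b hb h
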